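/- Suppose K : ℝ² → ℝ satisfies α_1(K) > 0 and |K(x)| ≤ C(|x|^m + 1) for all x ∈ ℝ² for some constants C, m > 0. Then there exists p > 1 with α_p(K) > 0. -/

import Mathlib

open MeasureTheory Real Filter
noncomputable section
abbrev E2 : Type := EuclideanSpace ℝ (Fin 2)
/-- Classical Laplacian on ℝ². -/
def lap (u : E2 → ℝ) (x : E2) : ℝ :=
  ∑ i : Fin 2, fderiv ℝ (fun y => fderiv ℝ u y (EuclideanSpace.single i 1)) x (EuclideanSpace.single i 1)
/-- The set of admissible exponents α in the definition of α_p(K). -/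
def alphaSet (K : E2 → ℝ) (p : ℝ) : Set ℝ :=
  {α : ℝ | Integrable (fun x : E2 => |K x| ^ p * (1 + ‖x‖) ^ (2*α*p + 2*(p-1)))}
/-- α_p(K), with the convention sup ∅ = -∞ (⊥ in `EReal`). -/
def alphaP (K : E2 → ℝ) (p : ℝ) : EReal :=
  sSup ((fun a : ℝ => (a : EReal)) '' alphaSet K p)

theorem stmt2 (K : E2 → ℝ) (hmeas : Measurable K) (C m : ℝ) (hC : 0 < C) (hm : 0 < m)
    (hgrow : ∀ x : E2, |K x| ≤ C * (‖x‖ ^ m + 1))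
    (ha1 : ∃ α : ℝ, 0 < α ∧ Integrable (fun x : E2 => |K x| * (1 + ‖x‖) ^ (2*α))) :
    ∃ p : ℝ, 1 < p ∧ (0 : EReal) < alphaP K p := by
  obtain ⟨α, hα, hint⟩ := ha1
  have hden : (0:ℝ) < m + α + 2 := by linarith
  set p : ℝ := 1 + α / (m + α + 2) with hp_def
  have hp1 : 1 < p := by
    have : 0 < α / (m + α + 2) := div_pos hα hden
    simp [hp_def]; linarith
  have hp0 : 0 < p - 1 := by linarith
  have hkey : (p - 1) * (m + α + 2) = α := by
    rw [hp_def, add_sub_cancel_left]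
    field_simp
  refine ⟨p, hp1, ?_⟩
  -- show α/2 ∈ alphaSet K p
  set E : ℝ := 2*(α/2)*p + 2*(p-1) with hE_def
  have hmem : (α/2) ∈ alphaSet K p := by
    have hbound : ∀ x : E2,
        |K x| ^ p * (1 + ‖x‖) ^ E ≤ (2*C)^(p-1) * (|K x| * (1 + ‖x‖) ^ (2*α)) := by
      intro x
      have h1x : (1:ℝ) ≤ 1 + ‖x‖ := by
        have := norm_nonneg x; linarith
      have h0x : (0:ℝ) < 1 + ‖x‖ := by linarith
      have hK2 : |K x| ≤ 2*C * (1 + ‖x‖) ^ m := by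
        have h1 : ‖x‖ ^ m ≤ (1 + ‖x‖) ^ m :=
          Real.rpow_le_rpow (norm_nonneg x) (by linarith) hm.le
        have h2 : (1:ℝ) ≤ (1 + ‖x‖) ^ m := by
          calc (1:ℝ) = 1 ^ m := (Real.one_rpow m).symm
          _ ≤ (1 + ‖x‖) ^ m := Real.rpow_le_rpow zero_le_one h1x hm.le
        calc |K x| ≤ C * (‖x‖ ^ m + 1) := hgrow x
        _ ≤ C * ((1 + ‖x‖)^m + (1 + ‖x‖)^m) := by
            apply mul_le_mul_of_nonneg_left (by linarith) hC.le
        _ = 2*C * (1 + ‖x‖) ^ m := by ring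
      have hsplit : |K x| ^ p = |K x| * |K x| ^ (p-1) := by
        rw [show p = 1 + (p-1) by ring, Real.rpow_add' (abs_nonneg _) (by linarith),
          Real.rpow_one]
        ring_nf
      have hKp : |K x| ^ (p-1) ≤ (2*C)^(p-1) * (1 + ‖x‖) ^ (m*(p-1)) := by
        calc |K x| ^ (p-1) ≤ (2*C * (1 + ‖x‖) ^ m) ^ (p-1) :=
              Real.rpow_le_rpow (abs_nonneg _) hK2 hp0.le
        _ = (2*C)^(p-1) * ((1 + ‖x‖) ^ m) ^ (p-1) :=
              Real.mul_rpow (by linarith) (Real.rpow_nonneg h0x.le m)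
        _ = (2*C)^(p-1) * (1 + ‖x‖) ^ (m*(p-1)) := by
              rw [← Real.rpow_mul h0x.le]
      have hexp : m*(p-1) + E ≤ 2*α := by
        have : m*(p-1) + E = α + (p-1)*(m+α+2) := by
          rw [hE_def, hp_def]; ring
        rw [this, hkey]; linarith
      have hpow : (1 + ‖x‖) ^ (m*(p-1)) * (1 + ‖x‖) ^ E ≤ (1 + ‖x‖) ^ (2*α) := by
        rw [← Real.rpow_add h0x]
        exact Real.rpow_le_rpow_of_exponent_le h1x hexp
      calc |K x| ^ p * (1 + ‖x‖) ^ E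
          = |K x| * (|K x| ^ (p-1) * (1 + ‖x‖) ^ E) := by rw [hsplit]; ring
        _ ≤ |K x| * ((2*C)^(p-1) * (1 + ‖x‖) ^ (m*(p-1)) * (1 + ‖x‖) ^ E) := by
            apply mul_le_mul_of_nonneg_left _ (abs_nonneg _)
            exact mul_le_mul_of_nonneg_right hKp (Real.rpow_nonneg h0x.le E)
        _ = (2*C)^(p-1) * (|K x| * ((1 + ‖x‖) ^ (m*(p-1)) * (1 + ‖x‖) ^ E)) := by ring
        _ ≤ (2*C)^(p-1) * (|K x| * (1 + ‖x‖) ^ (2*α)) := by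
            apply mul_le_mul_of_nonneg_left _ (Real.rpow_nonneg (by positivity) _)
            exact mul_le_mul_of_nonneg_left hpow (abs_nonneg _)
    have hmeas' : AEStronglyMeasurable
        (fun x : E2 => |K x| ^ p * (1 + ‖x‖) ^ E) volume := by
      apply Measurable.aestronglyMeasurable
      have h1 : Measurable fun x : E2 => |K x| ^ p :=
        (Real.continuous_rpow_const (by linarith : (0:ℝ) ≤ p)).measurable.comp hmeas.abs
      have h2 : Continuous fun x : E2 => (1 + ‖x‖) ^ E :=
        (continuous_const.add continuous_norm).rpow_const fun x =>
          Or.inl (ne_of_gt (show (0:ℝ) < 1 + ‖x‖ by have := norm_nonneg x; linarith))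
      exact h1.mul h2.measurable
    refine (hint.const_mul ((2*C)^(p-1))).mono' hmeas' ?_
    filter_upwards with x
    have h0x : (0:ℝ) < 1 + ‖x‖ := by have := norm_nonneg x; linarith
    rw [Real.norm_eq_abs, abs_of_nonneg (by positivity)]
    exact hbound x
  have hle : ((α/2 : ℝ) : EReal) ≤ alphaP K p :=
    le_sSup ⟨α/2, hmem, rfl⟩
  refine lt_of_lt_of_le ?_ hle
  exact_mod_cast (by linarith : (0:ℝ) < α/2)
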